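/- Let f : [a,b) → ℝ be Φ-uniformly convex with increasing modulus Φ : [0,b−a) → ℝ₊, Φ(0)=0. Let p, q be probability vectors with qᵢ > 0, m = min_i(pᵢ/qᵢ), and suppose x₁ ≤ ... ≤ x_{k−1} ≤ x̄_q ≤ x_k ≤ ... ≤ xₙ where x̄_q = ∑qᵢxᵢ. Then Jₙ(f,x,p) − m·Jₙ(f,x,q) ≥ ∑_{i=1, i≠k−1}^{n−1} (pᵢ−mqᵢ)(p_{i+1}−mq_{i+1})Φ(x_{i+1}−xᵢ) + m(p_{k−1}−mq_{k−1})Φ(x̄_q − x_{k−1}) + m(p_k−mq_k)Φ(x_k − x̄_q). -/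

import Mathlib

lemma songYang {a b : ℝ} {f Φ : ℝ → ℝ}
    (hΦpos : ∀ t ∈ Set.Ico 0 (b - a), 0 ≤ Φ t)
    (hΦmono : MonotoneOn Φ (Set.Ico 0 (b - a)))
    (huc : ∀ x ∈ Set.Ico a b, ∀ y ∈ Set.Ico a b, ∀ t ∈ Set.Icc (0 : ℝ) 1,
      t * f x + (1 - t) * f y ≥ f (t * x + (1 - t) * y) + t * (1 - t) * Φ |x - y|) :
    ∀ N : ℕ, 1 ≤ N → ∀ y w : ℕ → ℝ,
      (∀ i ∈ Finset.Icc 1 N, y i ∈ Set.Ico a b) →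
      (∀ i j, 1 ≤ i → i ≤ j → j ≤ N → y i ≤ y j) →
      (∀ i ∈ Finset.Icc 1 N, 0 ≤ w i) →
      (∑ i ∈ Finset.Icc 1 N, w i = 1) →
      ∑ i ∈ Finset.Icc 1 N, w i * f (y i) - f (∑ i ∈ Finset.Icc 1 N, w i * y i) ≥
        ∑ i ∈ Finset.Icc 1 (N - 1), w i * w (i + 1) * Φ (y (i + 1) - y i) := by
  intro N
  induction N with
  | zero => omega
  | succ M IH =>
    intro _ y w hy hys hw hw1
    rcases Nat.eq_zero_or_pos M with hM0 | hM1
    · subst hM0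
      simp only [Finset.Icc_self, Finset.sum_singleton] at hw1 ⊢
      simp [hw1]
    -- M ≥ 1
    obtain ⟨M', rfl⟩ : ∃ M', M = M' + 1 := ⟨M - 1, by omega⟩
    set M := M' + 1 with hMdef
    have hsuc : (1:ℕ) ≤ M + 1 := by omega
    have hsum_top : ∀ g : ℕ → ℝ, ∑ i ∈ Finset.Icc 1 (M+1), g i = ∑ i ∈ Finset.Icc 1 M, g i + g (M+1) :=
      fun g => Finset.sum_Icc_succ_top hsuc g
    have hsum_top' : ∀ g : ℕ → ℝ, ∑ i ∈ Finset.Icc 1 M, g i = ∑ i ∈ Finset.Icc 1 M', g i + g M :=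
      fun g => Finset.sum_Icc_succ_top (by omega) g
    set s : ℝ := ∑ i ∈ Finset.Icc 1 M, w i with hs
    have hst : s + w (M+1) = 1 := by rw [hsum_top w] at hw1; exact hw1
    have hs0 : 0 ≤ s := Finset.sum_nonneg fun i hi => hw i (by rw [Finset.mem_Icc] at hi ⊢; omega)
    have ht0 : 0 ≤ w (M + 1) := hw (M+1) (Finset.mem_Icc.mpr ⟨by omega, by omega⟩)
    have hwM : ∀ i ∈ Finset.Icc 1 M, 0 ≤ w i := fun i hi => hw i (by rw [Finset.mem_Icc] at hi ⊢; omega)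
    have hyM : ∀ i ∈ Finset.Icc 1 M, y i ∈ Set.Ico a b := fun i hi => hy i (by rw [Finset.mem_Icc] at hi ⊢; omega)
    have hΦnn : ∀ i j, 1 ≤ i → i ≤ j → j ≤ M + 1 → 0 ≤ Φ (y j - y i) := by
      intro i j h1 h2 h3
      apply hΦpos
      constructor
      · rw [sub_nonneg]; exact hys i j h1 h2 h3
      · have h1' := (hy i (Finset.mem_Icc.mpr ⟨by omega, by omega⟩)).1
        have h2' := (hy j (Finset.mem_Icc.mpr ⟨by omega, by omega⟩)).2
        exact lt_of_lt_of_le (by linarith) (le_refl (b-a))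
    have hErase : M + 1 - 1 = M := rfl
    have hErase' : M - 1 = M' := rfl
    rw [hErase]
    rcases eq_or_lt_of_le hs0 with hs0' | hspos
    · -- s = 0 : all weight on last point
      have hz : ∀ i ∈ Finset.Icc 1 M, w i = 0 :=
        (Finset.sum_eq_zero_iff_of_nonneg hwM).mp hs0'.symm
      have ht1 : w (M+1) = 1 := by linarith
      have e1 : ∑ i ∈ Finset.Icc 1 (M+1), w i * f (y i) = f (y (M+1)) := by
        rw [hsum_top, Finset.sum_eq_zero (fun i hi => by rw [hz i hi]; ring), ht1]; ring
      have e2 : ∑ i ∈ Finset.Icc 1 (M+1), w i * y i = y (M+1) := by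
        rw [hsum_top, Finset.sum_eq_zero (fun i hi => by rw [hz i hi]; ring), ht1]; ring
      rw [e1, e2]
      have : ∑ i ∈ Finset.Icc 1 M, w i * w (i+1) * Φ (y (i+1) - y i) = 0 := by
        apply Finset.sum_eq_zero
        intro i hi
        rw [hz i hi]; ring
      rw [this]; simp
    · -- s > 0
      have hsne : s ≠ 0 := ne_of_gt hspos
      set w' : ℕ → ℝ := fun i => w i / s with hw'
      have hw'M : ∀ i ∈ Finset.Icc 1 M, 0 ≤ w' i := fun i hi => div_nonneg (hwM i hi) hs0
      have hw'1 : ∑ i ∈ Finset.Icc 1 M, w' i = 1 := by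
        rw [hw', ← Finset.sum_div]
        exact div_self hsne
      have hysM : ∀ i j, 1 ≤ i → i ≤ j → j ≤ M → y i ≤ y j :=
        fun i j h1 h2 h3 => hys i j h1 h2 (by omega)
      have key := IH (by omega) y w' hyM hysM hw'M hw'1
      rw [hErase'] at key
      set z : ℝ := ∑ i ∈ Finset.Icc 1 M, w' i * y i with hzdef
      have hz_ge : y 1 ≤ z := by
        calc y 1 = ∑ i ∈ Finset.Icc 1 M, w' i * y 1 := by rw [← Finset.sum_mul, hw'1, one_mul]
        _ ≤ z := Finset.sum_le_sum (fun i hi => by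
            have hi' := Finset.mem_Icc.mp hi
            exact mul_le_mul_of_nonneg_left (hys 1 i le_rfl hi'.1 (by omega)) (hw'M i hi))
      have hz_le : z ≤ y M := by
        calc z ≤ ∑ i ∈ Finset.Icc 1 M, w' i * y M := Finset.sum_le_sum (fun i hi => by
            have hi' := Finset.mem_Icc.mp hi
            exact mul_le_mul_of_nonneg_left (hys i M hi'.1 hi'.2 (by omega)) (hw'M i hi))
        _ = y M := by rw [← Finset.sum_mul, hw'1, one_mul]
      have hy1 := hy 1 (Finset.mem_Icc.mpr ⟨by omega, by omega⟩)
      have hyMm := hy M (Finset.mem_Icc.mpr ⟨by omega, by omega⟩)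
      have hyM1 := hy (M+1) (Finset.mem_Icc.mpr ⟨by omega, by omega⟩)
      have hz_mem : z ∈ Set.Ico a b := ⟨le_trans hy1.1 hz_ge, lt_of_le_of_lt hz_le hyMm.2⟩
      have hyMle : y M ≤ y (M+1) := hys M (M+1) (by omega) (by omega) le_rfl
      have habs : |y (M+1) - z| = y (M+1) - z := by
        rw [abs_of_nonneg]; linarith
      have huc' := huc (y (M+1)) hyM1 z hz_mem (w (M+1)) ⟨ht0, by linarith⟩
      rw [habs] at huc'
      have h1mt : 1 - w (M+1) = s := by linarith
      rw [h1mt] at huc'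
      -- sums decomposition
      have ews : ∀ i ∈ Finset.Icc 1 M, w i = s * w' i := by
        intro i _; rw [hw']; field_simp
      have e1 : ∑ i ∈ Finset.Icc 1 (M+1), w i * f (y i)
          = s * (∑ i ∈ Finset.Icc 1 M, w' i * f (y i)) + w (M+1) * f (y (M+1)) := by
        rw [hsum_top, Finset.mul_sum]
        congr 1
        apply Finset.sum_congr rfl
        intro i hi; rw [ews i hi]; ring
      have e2 : ∑ i ∈ Finset.Icc 1 (M+1), w i * y i = w (M+1) * y (M+1) + s * z := by
        rw [hsum_top, hzdef, Finset.mul_sum]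
        rw [add_comm]
        congr 1
        apply Finset.sum_congr rfl
        intro i hi; rw [ews i hi]; ring
      rw [e1, e2]
      -- Φ comparison at the last gap
      have hwMle : w M ≤ s := Finset.single_le_sum hwM (Finset.mem_Icc.mpr ⟨by omega, by omega⟩)
      have hΦlast : w M * w (M+1) * Φ (y (M+1) - y M) ≤ w (M+1) * s * Φ (y (M+1) - z) := by
        have hd1 : (y (M+1) - y M) ∈ Set.Ico 0 (b - a) := by
          constructor
          · linarith
          · exact lt_of_lt_of_le (by linarith [hyMm.1, hyM1.2]) (le_refl (b-a))
        have hd2 : (y (M+1) - z) ∈ Set.Ico 0 (b - a) := by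
          constructor
          · linarith
          · exact lt_of_lt_of_le (by linarith [hz_mem.1, hyM1.2]) (le_refl (b-a))
        have hmono' := hΦmono hd1 hd2 (by linarith)
        have h1 := hΦpos _ hd1
        have hwM0 : 0 ≤ w M := hwM M (Finset.mem_Icc.mpr ⟨by omega, by omega⟩)
        nlinarith [mul_nonneg (sub_nonneg.mpr hwMle) (mul_nonneg ht0 h1),
          mul_nonneg (mul_nonneg hs0 ht0) (sub_nonneg.mpr hmono')]
      -- lower bound for s * R'
      have hRs : ∑ i ∈ Finset.Icc 1 M', w i * w (i+1) * Φ (y (i+1) - y i)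
          ≤ s * ∑ i ∈ Finset.Icc 1 M', w' i * w' (i+1) * Φ (y (i+1) - y i) := by
        rw [Finset.mul_sum]
        apply Finset.sum_le_sum
        intro i hi
        have hi' := Finset.mem_Icc.mp hi
        have e : s * (w' i * w' (i+1) * Φ (y (i+1) - y i)) = (w i * w (i+1) * Φ (y (i+1) - y i)) / s := by
          rw [hw']; field_simp
        rw [e, le_div_iff₀ hspos]
        have hterm : 0 ≤ w i * w (i+1) * Φ (y (i+1) - y i) := by
          apply mul_nonneg (mul_nonneg (hw i (Finset.mem_Icc.mpr ⟨by omega, by omega⟩)) (hw (i+1) (Finset.mem_Icc.mpr ⟨by omega, by omega⟩)))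
          exact hΦnn i (i+1) hi'.1 (by omega) (by omega)
        have hs1 : s ≤ 1 := by linarith
        nlinarith [mul_nonneg hterm (sub_nonneg.mpr hs1)]
      -- final sum decomposition of RHS
      have hRHS : ∑ i ∈ Finset.Icc 1 M, w i * w (i+1) * Φ (y (i+1) - y i)
          = ∑ i ∈ Finset.Icc 1 M', w i * w (i+1) * Φ (y (i+1) - y i)
            + w M * w (M+1) * Φ (y (M+1) - y M) :=
        hsum_top' _
      rw [hRHS]
      have hIH' : s * (∑ i ∈ Finset.Icc 1 M, w' i * f (y i) - f z)
          ≥ s * ∑ i ∈ Finset.Icc 1 M', w' i * w' (i+1) * Φ (y (i+1) - y i) :=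
        mul_le_mul_of_nonneg_left key hs0
      linarith [hIH', hRs, hΦlast, huc']

theorem stmt15 {a b : ℝ} (hab : a < b) {f Φ : ℝ → ℝ}
    (hΦ0 : Φ 0 = 0) (hΦpos : ∀ t ∈ Set.Ico 0 (b - a), 0 ≤ Φ t)
    (hΦmono : MonotoneOn Φ (Set.Ico 0 (b - a)))
    (huc : ∀ x ∈ Set.Ico a b, ∀ y ∈ Set.Ico a b, ∀ t ∈ Set.Icc (0 : ℝ) 1,
      t * f x + (1 - t) * f y ≥ f (t * x + (1 - t) * y) + t * (1 - t) * Φ |x - y|)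
    {n : ℕ} (hn : 0 < n) (x : ℕ → ℝ) (hx : ∀ i ∈ Finset.Icc 1 n, x i ∈ Set.Ico a b)
    (hmono : ∀ i j, 1 ≤ i → i ≤ j → j ≤ n → x i ≤ x j)
    (p q : ℕ → ℝ) (hp : ∀ i ∈ Finset.Icc 1 n, 0 ≤ p i)
    (hq : ∀ i ∈ Finset.Icc 1 n, 0 < q i)
    (hp1 : ∑ i ∈ Finset.Icc 1 n, p i = 1) (hq1 : ∑ i ∈ Finset.Icc 1 n, q i = 1)
    (m : ℝ) (hm : IsLeast {r | ∃ i ∈ Finset.Icc 1 n, r = p i / q i} m)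
    (k : ℕ) (hk2 : 2 ≤ k) (hkn : k ≤ n)
    (hleft : x (k - 1) ≤ ∑ i ∈ Finset.Icc 1 n, q i * x i)
    (hright : ∑ i ∈ Finset.Icc 1 n, q i * x i ≤ x k) :
    (∑ i ∈ Finset.Icc 1 n, p i * f (x i) - f (∑ i ∈ Finset.Icc 1 n, p i * x i)) -
      m * (∑ i ∈ Finset.Icc 1 n, q i * f (x i) - f (∑ i ∈ Finset.Icc 1 n, q i * x i)) ≥
    (∑ i ∈ (Finset.Icc 1 (n - 1)).erase (k - 1),
        (p i - m * q i) * (p (i + 1) - m * q (i + 1)) * Φ (x (i + 1) - x i)) +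
      m * (p (k - 1) - m * q (k - 1)) *
        Φ ((∑ i ∈ Finset.Icc 1 n, q i * x i) - x (k - 1)) +
      m * (p k - m * q k) * Φ (x k - ∑ i ∈ Finset.Icc 1 n, q i * x i) := by
  have hn2 : 2 ≤ n := le_trans hk2 hkn
  set c : ℝ := ∑ i ∈ Finset.Icc 1 n, q i * x i with hcdef
  obtain ⟨hmem, hmlb⟩ := hm
  obtain ⟨i₀, hi₀, hmval⟩ := hmem
  have hm0 : 0 ≤ m := by
    rw [hmval]; exact div_nonneg (hp i₀ hi₀) (le_of_lt (hq i₀ hi₀))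
  have hpmq : ∀ i ∈ Finset.Icc 1 n, 0 ≤ p i - m * q i := by
    intro i hi
    have h1 : m ≤ p i / q i := hmlb ⟨i, hi, rfl⟩
    have h2 := hq i hi
    rw [le_div_iff₀ h2] at h1; linarith
  set w : ℕ → ℝ := fun i => if i < k then p i - m * q i
    else if i = k then m else p (i-1) - m * q (i-1) with hwdef
  set y : ℕ → ℝ := fun i => if i < k then x i else if i = k then c else x (i-1) with hydef
  have hwlt : ∀ i, i < k → w i = p i - m * q i := by
    intro i h; simp only [hwdef]; rw [if_pos h]
  have hwk : w k = m := by
    simp only [hwdef]; rw [if_neg (by omega)]; simp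
  have hwgt : ∀ i, k < i → w i = p (i-1) - m * q (i-1) := by
    intro i h; simp only [hwdef]; rw [if_neg (by omega), if_neg (by omega)]
  have hylt : ∀ i, i < k → y i = x i := by
    intro i h; simp only [hydef]; rw [if_pos h]
  have hyk : y k = c := by
    simp only [hydef]; rw [if_neg (by omega)]; simp
  have hygt : ∀ i, k < i → y i = x (i-1) := by
    intro i h; simp only [hydef]; rw [if_neg (by omega), if_neg (by omega)]
  have icc_ioc : ∀ t : ℕ, Finset.Icc 1 t = Finset.Ioc 0 t := by
    intro t; ext i; simp [Finset.mem_Icc, Finset.mem_Ioc]; omega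
  have ioc_sing : ∀ u v : ℕ, u + 1 = v → Finset.Ioc u v = {v} := by
    intro u v h; ext i; simp only [Finset.mem_Ioc, Finset.mem_singleton]; omega
  have reidx : ∀ (g : ℕ → ℝ) (u v : ℕ), 1 ≤ u → 1 ≤ v →
      ∑ i ∈ Finset.Ioc u v, g (i-1) = ∑ j ∈ Finset.Ioc (u-1) (v-1), g j := by
    intro g u v hu hv
    obtain ⟨u', rfl⟩ : ∃ u', u = u' + 1 := ⟨u - 1, by omega⟩
    obtain ⟨v', rfl⟩ : ∃ v', v = v' + 1 := ⟨v - 1, by omega⟩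
    simp only [Nat.add_sub_cancel]
    rw [← Finset.map_add_right_Ioc, Finset.sum_map]
    simp [addRightEmbedding]
  -- main split lemma
  have split : ∀ g : ℝ → ℝ, ∑ i ∈ Finset.Icc 1 (n+1), w i * g (y i)
      = ∑ i ∈ Finset.Icc 1 n, (p i - m * q i) * g (x i) + m * g c := by
    intro g
    rw [icc_ioc, icc_ioc]
    rw [← Finset.sum_Ioc_consecutive _ (show (0:ℕ) ≤ k-1 by omega) (show k-1 ≤ n+1 by omega)]
    rw [← Finset.sum_Ioc_consecutive _ (show (k-1:ℕ) ≤ k by omega) (show k ≤ n+1 by omega)]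
    rw [← Finset.sum_Ioc_consecutive _ (show (0:ℕ) ≤ k-1 by omega) (show k-1 ≤ n by omega)]
    have hkk : k - 1 + 1 = k := by omega
    have e1 : ∑ i ∈ Finset.Ioc 0 (k-1), w i * g (y i)
        = ∑ i ∈ Finset.Ioc 0 (k-1), (p i - m * q i) * g (x i) := by
      apply Finset.sum_congr rfl
      intro i hi
      have hi' := Finset.mem_Ioc.mp hi
      rw [hwlt i (by omega), hylt i (by omega)]
    have e2 : ∑ i ∈ Finset.Ioc (k-1) k, w i * g (y i) = m * g c := by
      rw [ioc_sing (k-1) k (by omega), Finset.sum_singleton, hwk, hyk]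
    have e3 : ∑ i ∈ Finset.Ioc k (n+1), w i * g (y i)
        = ∑ i ∈ Finset.Ioc (k-1) n, (p i - m * q i) * g (x i) := by
      have : ∑ i ∈ Finset.Ioc k (n+1), w i * g (y i)
          = ∑ i ∈ Finset.Ioc k (n+1), (p (i-1) - m * q (i-1)) * g (x (i-1)) := by
        apply Finset.sum_congr rfl
        intro i hi
        have hi' := Finset.mem_Ioc.mp hi
        rw [hwgt i (by omega), hygt i (by omega)]
      rw [this]
      have := reidx (fun j => (p j - m * q j) * g (x j)) k (n+1) (by omega) (by omega)
      simp only [Nat.add_sub_cancel] at this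
      exact this
    rw [e1, e2, e3]; ring
  -- weights sum to 1
  have sums : ∀ u : ℕ → ℝ, ∑ i ∈ Finset.Icc 1 n, (p i - m * q i) * u i
      = ∑ i ∈ Finset.Icc 1 n, p i * u i - m * ∑ i ∈ Finset.Icc 1 n, q i * u i := by
    intro u
    rw [Finset.mul_sum, ← Finset.sum_sub_distrib]
    apply Finset.sum_congr rfl; intro i _; ring
  have hsub : ∑ i ∈ Finset.Icc 1 n, (p i - m * q i) = 1 - m := by
    have := sums (fun _ => 1)
    simp only [mul_one] at this
    rw [this, hp1, hq1]; ring
  have hwsum : ∑ i ∈ Finset.Icc 1 (n+1), w i = 1 := by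
    have := split (fun _ => (1:ℝ))
    simp only [mul_one] at this
    rw [this, hsub]; ring
  -- barycenter
  have hwy : ∑ i ∈ Finset.Icc 1 (n+1), w i * y i = ∑ i ∈ Finset.Icc 1 n, p i * x i := by
    have := split id
    simp only [id_eq] at this
    rw [this]
    rw [sums x, ← hcdef]; ring
  have hwf : ∑ i ∈ Finset.Icc 1 (n+1), w i * f (y i)
      = ∑ i ∈ Finset.Icc 1 n, p i * f (x i) - m * ∑ i ∈ Finset.Icc 1 n, q i * f (x i) + m * f c := by
    rw [split f]
    rw [sums (fun i => f (x i))]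
  -- c membership
  have hck1 : x (k-1) ∈ Set.Ico a b := hx (k-1) (Finset.mem_Icc.mpr ⟨by omega, by omega⟩)
  have hck : x k ∈ Set.Ico a b := hx k (Finset.mem_Icc.mpr ⟨by omega, by omega⟩)
  have hc : c ∈ Set.Ico a b := ⟨le_trans hck1.1 hleft, lt_of_le_of_lt hright hck.2⟩
  -- y membership
  have hy' : ∀ i ∈ Finset.Icc 1 (n+1), y i ∈ Set.Ico a b := by
    intro i hi
    have hi' := Finset.mem_Icc.mp hi
    by_cases h1 : i < k
    · rw [hylt i h1]; exact hx i (Finset.mem_Icc.mpr ⟨by omega, by omega⟩)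
    · by_cases h2 : i = k
      · rw [h2, hyk]; exact hc
      · rw [hygt i (by omega)]; exact hx (i-1) (Finset.mem_Icc.mpr ⟨by omega, by omega⟩)
  -- y sorted
  have hys' : ∀ i j, 1 ≤ i → i ≤ j → j ≤ n + 1 → y i ≤ y j := by
    intro i j h1 h2 h3
    by_cases hjk : j < k
    · rw [hylt i (by omega), hylt j hjk]; exact hmono i j h1 h2 (by omega)
    · by_cases hjk2 : j = k
      · by_cases hik : i < k
        · rw [hylt i hik, hjk2, hyk]
          exact le_trans (hmono i (k-1) h1 (by omega) (by omega)) hleft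
        · have hik : i = k := by omega
          rw [hik, hjk2]
      · rw [hygt j (by omega)]
        by_cases hik : i < k
        · rw [hylt i hik]; exact hmono i (j-1) h1 (by omega) (by omega)
        · by_cases hik2 : i = k
          · rw [hik2, hyk]
            exact le_trans hright (hmono k (j-1) (by omega) (by omega) (by omega))
          · rw [hygt i (by omega)]
            exact hmono (i-1) (j-1) (by omega) (by omega) (by omega)
  -- w nonneg
  have hw' : ∀ i ∈ Finset.Icc 1 (n+1), 0 ≤ w i := by
    intro i hi
    have hi' := Finset.mem_Icc.mp hi
    by_cases h1 : i < k
    · rw [hwlt i h1]; exact hpmq i (Finset.mem_Icc.mpr ⟨by omega, by omega⟩)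
    · by_cases h2 : i = k
      · rw [h2, hwk]; exact hm0
      · rw [hwgt i (by omega)]; exact hpmq (i-1) (Finset.mem_Icc.mpr ⟨by omega, by omega⟩)
  have key := songYang hΦpos hΦmono huc (n+1) (by omega) y w hy' hys' hw' hwsum
  rw [hwy, hwf] at key
  rw [show n + 1 - 1 = n from rfl] at key
  -- decompose gap sum
  set T : ℕ → ℝ := fun i => (p i - m * q i) * (p (i + 1) - m * q (i + 1)) * Φ (x (i + 1) - x i) with hTdef
  have hgapA : w (k-1) * w (k-1+1) * Φ (y (k-1+1) - y (k-1))
      = m * (p (k-1) - m * q (k-1)) * Φ (c - x (k-1)) := by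
    rw [show k - 1 + 1 = k by omega, hwlt (k-1) (by omega), hwk, hylt (k-1) (by omega), hyk]
    ring
  have hgapB : w k * w (k+1) * Φ (y (k+1) - y k)
      = m * (p k - m * q k) * Φ (x k - c) := by
    rw [hwk, hyk, hwgt (k+1) (by omega), hygt (k+1) (by omega)]
    rw [show k + 1 - 1 = k from rfl]
  have hgap : ∑ i ∈ Finset.Icc 1 n, w i * w (i+1) * Φ (y (i+1) - y i)
      = ∑ i ∈ Finset.Ioc 0 (k-2), T i + m * (p (k-1) - m * q (k-1)) * Φ (c - x (k-1))
        + m * (p k - m * q k) * Φ (x k - c) + ∑ i ∈ Finset.Ioc (k-1) (n-1), T i := by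
    rw [icc_ioc]
    rw [← Finset.sum_Ioc_consecutive _ (show (0:ℕ) ≤ k-2 by omega) (show k-2 ≤ n by omega)]
    rw [← Finset.sum_Ioc_consecutive _ (show (k-2:ℕ) ≤ k-1 by omega) (show k-1 ≤ n by omega)]
    rw [← Finset.sum_Ioc_consecutive _ (show (k-1:ℕ) ≤ k by omega) (show k ≤ n by omega)]
    have s1 : ∑ i ∈ Finset.Ioc 0 (k-2), w i * w (i+1) * Φ (y (i+1) - y i)
        = ∑ i ∈ Finset.Ioc 0 (k-2), T i := by
      apply Finset.sum_congr rfl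
      intro i hi
      have hi' := Finset.mem_Ioc.mp hi
      rw [hwlt i (by omega), hwlt (i+1) (by omega), hylt i (by omega), hylt (i+1) (by omega), hTdef]
    have s2 : ∑ i ∈ Finset.Ioc (k-2) (k-1), w i * w (i+1) * Φ (y (i+1) - y i)
        = m * (p (k-1) - m * q (k-1)) * Φ (c - x (k-1)) := by
      rw [ioc_sing (k-2) (k-1) (by omega), Finset.sum_singleton, hgapA]
    have s3 : ∑ i ∈ Finset.Ioc (k-1) k, w i * w (i+1) * Φ (y (i+1) - y i)
        = m * (p k - m * q k) * Φ (x k - c) := by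
      rw [ioc_sing (k-1) k (by omega), Finset.sum_singleton]
      exact hgapB
    have s4 : ∑ i ∈ Finset.Ioc k n, w i * w (i+1) * Φ (y (i+1) - y i)
        = ∑ i ∈ Finset.Ioc (k-1) (n-1), T i := by
      have e : ∑ i ∈ Finset.Ioc k n, w i * w (i+1) * Φ (y (i+1) - y i)
          = ∑ i ∈ Finset.Ioc k n, T (i-1) := by
        apply Finset.sum_congr rfl
        intro i hi
        have hi' := Finset.mem_Ioc.mp hi
        rw [hwgt i (by omega), hwgt (i+1) (by omega), hygt i (by omega), hygt (i+1) (by omega), hTdef]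
        simp only
        rw [show i + 1 - 1 = i from rfl, show i - 1 + 1 = i by omega]
      rw [e]
      exact reidx T k n (by omega) (by omega)
    rw [s1, s2, s3, s4]; ring
  rw [hgap] at key
  -- erase sum
  have hkmem : k - 1 ∈ Finset.Icc 1 (n-1) := Finset.mem_Icc.mpr ⟨by omega, by omega⟩
  have herase : ∑ i ∈ (Finset.Icc 1 (n-1)).erase (k-1), T i + T (k-1) = ∑ i ∈ Finset.Icc 1 (n-1), T i :=
    Finset.sum_erase_add _ _ hkmem
  have hfull : ∑ i ∈ Finset.Icc 1 (n-1), T i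
      = ∑ i ∈ Finset.Ioc 0 (k-2), T i + T (k-1) + ∑ i ∈ Finset.Ioc (k-1) (n-1), T i := by
    rw [icc_ioc]
    rw [← Finset.sum_Ioc_consecutive _ (show (0:ℕ) ≤ k-2 by omega) (show k-2 ≤ n-1 by omega)]
    rw [← Finset.sum_Ioc_consecutive _ (show (k-2:ℕ) ≤ k-1 by omega) (show k-1 ≤ n-1 by omega)]
    rw [ioc_sing (k-2) (k-1) (by omega), Finset.sum_singleton]; ring
  have hTsum : ∑ i ∈ (Finset.Icc 1 (n-1)).erase (k-1), T i
      = ∑ i ∈ Finset.Ioc 0 (k-2), T i + ∑ i ∈ Finset.Ioc (k-1) (n-1), T i := by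
    linarith [herase, hfull]
  rw [hTsum]
  linarith [key]
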